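/- arXiv:2410.02623 — 3 statements merged into one kernel-verified Lean document; each statement's English description precedes it below -/
import Mathlib

section
/- Let y₁ < y₂ < y₃ < y₄ < y₅ be five real numbers. For a finite multiset P of reals, define SS(P) = Σ_{y ∈ P} (y − μ(P))², where μ(P) is the mean of P. Then SS({y₁, y₃}) + SS({y₂, y₄, y₅}) > SS({y₁, y₂}) + SS({y₃, y₄, y₅}); that is, exchanging y₂ and y₃ between the two groups strictly decreases the total within-group sum of squares. -/
open Finset

noncomputable def mu (P : Finset ℝ) : ℝ := (∑ y ∈ P, y) / P.card

noncomputable def SS (P : Finset ℝ) : ℝ := ∑ y ∈ P, (y - mu P) ^ 2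

lemma SS_pair (a b : ℝ) (hab : a ≠ b) : SS {a, b} = (a - b) ^ 2 / 2 := by
  unfold SS mu
  rw [Finset.sum_pair hab, Finset.sum_pair hab, Finset.card_pair hab]
  push_cast
  ring

lemma SS_triple (a b c : ℝ) (hab : a ≠ b) (hac : a ≠ c) (hbc : b ≠ c) :
    SS {a, b, c} = (a - b) ^ 2 / 3 + (a - c) ^ 2 / 3 + (b - c) ^ 2 / 3 := by
  unfold SS mu
  have hc : ({a, b, c} : Finset ℝ).card = 3 := by
    rw [Finset.card_insert_of_notMem (by simp [hab, hac]),
        Finset.card_pair hbc]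
  have hs : ∀ f : ℝ → ℝ, (∑ y ∈ ({a, b, c} : Finset ℝ), f y) = f a + f b + f c := by
    intro f
    rw [Finset.sum_insert (by simp [hab, hac]), Finset.sum_pair hbc]
    ring
  rw [hs, hs, hc]
  push_cast
  ring

theorem stmt_0 (y₁ y₂ y₃ y₄ y₅ : ℝ)
    (h12 : y₁ < y₂) (h23 : y₂ < y₃) (h34 : y₃ < y₄) (h45 : y₄ < y₅) :
    SS {y₁, y₂} + SS {y₃, y₄, y₅} < SS {y₁, y₃} + SS {y₂, y₄, y₅} := by
  rw [SS_pair _ _ h12.ne, SS_pair _ _ (h12.trans h23).ne,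
      SS_triple _ _ _ h34.ne (h34.trans h45).ne h45.ne,
      SS_triple _ _ _ (h23.trans h34).ne (h23.trans (h34.trans h45)).ne h45.ne]
  nlinarith [sq_nonneg (y₄ + y₅ - y₂ - y₃), sq_nonneg (y₃ - y₂), mul_pos (sub_pos.2 h23) (sub_pos.2 h23)]
end

section
/- Let P₁ and P₂ be two disjoint finite sets of reals with means μ₁ < μ₂, and suppose there exist a ∈ P₁ and b ∈ P₂ with a > b. Then the partition obtained by swapping a and b, i.e., P₁' = (P₁ \ {a}) ∪ {b} and P₂' = (P₂ \ {b}) ∪ {a}, satisfies SS(P₁') + SS(P₂') ≤ SS(P₁) + SS(P₂), where SS(P) denotes the in-group sum of squared deviations from the group mean. -/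
open Finset

lemma SS_eq (P : Finset ℝ) (hP : P.Nonempty) :
    SS P = (∑ y ∈ P, y ^ 2) - (∑ y ∈ P, y) ^ 2 / P.card := by
  have hc : (P.card : ℝ) ≠ 0 := by
    exact_mod_cast (Finset.card_pos.mpr hP).ne'
  unfold SS mu
  set S := ∑ y ∈ P, y with hS
  have h1 : ∀ y ∈ P, (y - S / P.card) ^ 2
      = y ^ 2 - 2 * (S / P.card) * y + (S / P.card) ^ 2 := by
    intro y _; ring
  rw [Finset.sum_congr rfl h1]
  rw [Finset.sum_add_distrib, Finset.sum_sub_distrib, ← Finset.mul_sum,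
    Finset.sum_const, nsmul_eq_mul, ← hS]
  field_simp
  ring

theorem stmt_4 (P₁ P₂ : Finset ℝ) (hdisj : Disjoint P₁ P₂)
    (h₁ : 2 ≤ P₁.card) (h₂ : 2 ≤ P₂.card)
    (hmu : mu P₁ < mu P₂)
    (a b : ℝ) (ha : a ∈ P₁) (hb : b ∈ P₂) (hab : b < a) :
    SS (insert b (P₁.erase a)) + SS (insert a (P₂.erase b)) ≤ SS P₁ + SS P₂ := by
  have hbP₁ : b ∉ P₁ := fun h => (Finset.disjoint_left.mp hdisj h) hb
  have haP₂ : a ∉ P₂ := fun h => (Finset.disjoint_left.mp hdisj ha) h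
  have hb1 : b ∉ P₁.erase a := fun h => hbP₁ (Finset.mem_of_mem_erase h)
  have ha2 : a ∉ P₂.erase b := fun h => haP₂ (Finset.mem_of_mem_erase h)
  have hn1 : (0:ℝ) < P₁.card := by exact_mod_cast lt_of_lt_of_le (by norm_num) h₁
  have hn2 : (0:ℝ) < P₂.card := by exact_mod_cast lt_of_lt_of_le (by norm_num) h₂
  have hcard1 : (insert b (P₁.erase a)).card = P₁.card := by
    rw [Finset.card_insert_of_notMem hb1, Finset.card_erase_of_mem ha]
    omega
  have hcard2 : (insert a (P₂.erase b)).card = P₂.card := by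
    rw [Finset.card_insert_of_notMem ha2, Finset.card_erase_of_mem hb]
    omega
  have hsum1 : ∑ y ∈ insert b (P₁.erase a), y = (∑ y ∈ P₁, y) - a + b := by
    rw [Finset.sum_insert hb1, Finset.sum_erase_eq_sub ha]; ring
  have hsum2 : ∑ y ∈ insert a (P₂.erase b), y = (∑ y ∈ P₂, y) - b + a := by
    rw [Finset.sum_insert ha2, Finset.sum_erase_eq_sub hb]; ring
  have hsq1 : ∑ y ∈ insert b (P₁.erase a), y ^ 2 = (∑ y ∈ P₁, y ^ 2) - a ^ 2 + b ^ 2 := by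
    rw [Finset.sum_insert hb1, Finset.sum_erase_eq_sub ha]; ring
  have hsq2 : ∑ y ∈ insert a (P₂.erase b), y ^ 2 = (∑ y ∈ P₂, y ^ 2) - b ^ 2 + a ^ 2 := by
    rw [Finset.sum_insert ha2, Finset.sum_erase_eq_sub hb]; ring
  have hne1 : (insert b (P₁.erase a)).Nonempty := Finset.insert_nonempty _ _
  have hne2 : (insert a (P₂.erase b)).Nonempty := Finset.insert_nonempty _ _
  have hP₁ne : P₁.Nonempty := ⟨a, ha⟩
  have hP₂ne : P₂.Nonempty := ⟨b, hb⟩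
  rw [SS_eq _ hne1, SS_eq _ hne2, SS_eq _ hP₁ne, SS_eq _ hP₂ne,
    hcard1, hcard2, hsum1, hsum2, hsq1, hsq2]
  set n : ℝ := (P₁.card : ℝ)
  set m : ℝ := (P₂.card : ℝ)
  set S₁ := ∑ y ∈ P₁, y
  set S₂ := ∑ y ∈ P₂, y
  have hmu' : S₁ / n < S₂ / m := hmu
  have hmu2 : S₁ * m < S₂ * n := by
    rw [div_lt_div_iff₀ hn1 hn2] at hmu'; linarith
  have key : (S₁ - a + b) ^ 2 / n + (S₂ - b + a) ^ 2 / m ≥ S₁ ^ 2 / n + S₂ ^ 2 / m := by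
    have e1 : (S₁ - a + b) ^ 2 / n = S₁ ^ 2 / n - 2 * (a - b) * (S₁ / n) + (a - b) ^ 2 / n := by
      field_simp; ring
    have e2 : (S₂ - b + a) ^ 2 / m = S₂ ^ 2 / m + 2 * (a - b) * (S₂ / m) + (a - b) ^ 2 / m := by
      field_simp; ring
    have hd : 0 < a - b := by linarith
    have h1 : 0 ≤ (a - b) ^ 2 / n := by positivity
    have h2 : 0 ≤ (a - b) ^ 2 / m := by positivity
    have h3 : 0 < (a - b) * (S₂ / m - S₁ / n) := mul_pos hd (sub_pos.mpr hmu')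
    rw [e1, e2]; nlinarith [h3]
  linarith
end

section
/- Let f, g: X → ℝ be functions on a data set {x₁,...,x_N} with all values f(xⱼ) distinct, let σ_f and σ_g be permutations of {1,...,N} sorting f and g in decreasing order respectively, and define T(σ) = (2/(N(N−1))) Σ_{i<i'} (f(x_{σ(i)}) − f(x_{σ(i')})). Then T(σ_f) − T(σ_g) ≤ (4/√N) (Σ_{j=1}^{N} (f(xⱼ) − g(xⱼ))²)^{1/2}. -/
open Finset

/-- Normalized pairwise-difference ranking statistic of a permutation,
measured with the scoring function `f`. -/
noncomputable def Tstat {X : Type*} {N : ℕ} (x : Fin N → X) (f : X → ℝ)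
    (σ : Equiv.Perm (Fin N)) : ℝ :=
  (2 / (N * (N - 1) : ℝ)) *
    ∑ p ∈ univ.filter (fun p : Fin N × Fin N => p.1 < p.2),
      (f (x (σ p.1)) - f (x (σ p.2)))

/-- The pairwise sum rewritten with position weights `N - 1 - 2 i`. -/
lemma pairSum_eq {N : ℕ} (v : Fin N → ℝ) :
    ∑ p ∈ univ.filter (fun p : Fin N × Fin N => p.1 < p.2), (v p.1 - v p.2)
      = ∑ i : Fin N, ((N : ℝ) - 1 - 2 * i.val) * v i := by
  classical
  rw [Finset.sum_filter, Fintype.sum_prod_type]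
  have h1 : ∀ i : Fin N, (∑ j : Fin N, if (i, j).1 < (i, j).2 then v (i, j).1 - v (i, j).2 else 0)
      = ((Finset.Ioi i).card : ℝ) * v i - ∑ j ∈ Finset.Ioi i, v j := by
    intro i
    simp only
    rw [← Finset.sum_filter, Finset.filter_lt_eq_Ioi, Finset.sum_sub_distrib,
      Finset.sum_const, nsmul_eq_mul]
  rw [Finset.sum_congr rfl fun i _ => h1 i, Finset.sum_sub_distrib]
  have swap : ∑ i : Fin N, ∑ j ∈ Finset.Ioi i, v j
      = ∑ j : Fin N, ((Finset.Iio j).card : ℝ) * v j := by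
    rw [Finset.sum_comm' (t' := univ) (s' := fun j => Finset.Iio j)
      (fun i j => by simp [Finset.mem_Ioi, Finset.mem_Iio])]
    simp [Finset.sum_const, nsmul_eq_mul]
  rw [swap, ← Finset.sum_sub_distrib]
  refine Finset.sum_congr rfl fun i _ => ?_
  have hi := i.isLt
  have hN : 1 ≤ N := Nat.one_le_iff_ne_zero.mpr (by omega)
  rw [Fin.card_Ioi, Fin.card_Iio]
  have hcast : ((N - 1 - (i : ℕ) : ℕ) : ℝ) = (N : ℝ) - 1 - (i : ℕ) := by
    rw [Nat.cast_sub (by omega), Nat.cast_sub (by exact_mod_cast hN)]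
    norm_num
  rw [hcast]
  ring

theorem stmt_18 {X : Type*} (N : ℕ) (hN : 0 < N) (x : Fin N → X) (f g : X → ℝ)
    (hf : Function.Injective fun j : Fin N => f (x j))
    (σf σg : Equiv.Perm (Fin N))
    (hσf : ∀ i j : Fin N, i ≤ j → f (x (σf j)) ≤ f (x (σf i)))
    (hσg : ∀ i j : Fin N, i ≤ j → g (x (σg j)) ≤ g (x (σg i))) :
    Tstat x f σf - Tstat x f σg
      ≤ (4 / Real.sqrt N) * Real.sqrt (∑ j, (f (x j) - g (x j)) ^ 2) := by
  classical
  set w : Fin N → ℝ := fun i => (N : ℝ) - 1 - 2 * i.val with hw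
  set δ : Fin N → ℝ := fun j => |f (x j) - g (x j)| with hδ
  set S : ℝ := ∑ j, δ j with hS
  set D : ℝ := Real.sqrt (∑ j, (f (x j) - g (x j)) ^ 2) with hD
  set c : ℝ := 2 / ((N : ℝ) * ((N : ℝ) - 1)) with hc
  have hNR : (1 : ℝ) ≤ (N : ℝ) := by exact_mod_cast hN
  have hc0 : 0 ≤ c := by
    apply div_nonneg (by norm_num)
    nlinarith
  have hwbd : ∀ i : Fin N, |w i| ≤ (N : ℝ) - 1 := by
    intro i
    have h1 : ((i : ℕ) : ℝ) ≤ (N : ℝ) - 1 := by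
      have := i.isLt
      have : ((i : ℕ) : ℝ) + 1 ≤ (N : ℝ) := by exact_mod_cast this
      linarith
    have h0 : (0 : ℝ) ≤ ((i : ℕ) : ℝ) := Nat.cast_nonneg _
    rw [abs_le]
    constructor <;> simp only [hw] <;> nlinarith
  have hδ0 : ∀ j, 0 ≤ δ j := fun j => abs_nonneg _
  have hS0 : 0 ≤ S := Finset.sum_nonneg fun j _ => hδ0 j
  -- Tstat as weighted sum
  have hT : ∀ σ : Equiv.Perm (Fin N),
      Tstat x f σ = c * ∑ i, w i * f (x (σ i)) := by
    intro σ
    rw [Tstat, pairSum_eq (fun i => f (x (σ i)))]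
  -- generic perturbation step
  have approx : ∀ σ : Equiv.Perm (Fin N), ∀ u v : X → ℝ,
      ∑ i, w i * u (x (σ i)) - ∑ i, w i * v (x (σ i))
        ≤ ((N : ℝ) - 1) * ∑ j, |u (x j) - v (x j)| := by
    intro σ u v
    rw [← Finset.sum_sub_distrib]
    have : ∑ j, |u (x j) - v (x j)| = ∑ i, |u (x (σ i)) - v (x (σ i))| :=
      (Equiv.sum_comp σ fun j => |u (x j) - v (x j)|).symm
    rw [this, Finset.mul_sum]
    apply Finset.sum_le_sum
    intro i _
    have : w i * u (x (σ i)) - w i * v (x (σ i)) = w i * (u (x (σ i)) - v (x (σ i))) := by ring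
    rw [this]
    calc w i * (u (x (σ i)) - v (x (σ i))) ≤ |w i * (u (x (σ i)) - v (x (σ i)))| := le_abs_self _
      _ = |w i| * |u (x (σ i)) - v (x (σ i))| := abs_mul _ _
      _ ≤ ((N : ℝ) - 1) * |u (x (σ i)) - v (x (σ i))| :=
          mul_le_mul_of_nonneg_right (hwbd i) (abs_nonneg _)
  -- rearrangement step
  have rearr : ∑ i, w i * g (x (σf i)) ≤ ∑ i, w i * g (x (σg i)) := by
    have hmono : Monovary w (fun i => g (x (σg i))) := by
      intro i j hgij
      have hji : j ≤ i := by
        by_contra h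
        push_neg at h
        exact absurd (hσg i j h.le) (not_le.mpr hgij)
      have : (j : ℕ) ≤ (i : ℕ) := hji
      simp only [hw]
      have : ((j : ℕ) : ℝ) ≤ ((i : ℕ) : ℝ) := by exact_mod_cast this
      linarith
    have key := hmono.sum_smul_comp_perm_le_sum_smul (σ := σf.trans σg.symm)
    simpa [smul_eq_mul, Equiv.trans_apply] using key
  -- combine
  have habs : ∀ j, |f (x j) - g (x j)| = δ j := fun j => rfl
  have step1 : ∑ i, w i * f (x (σf i)) - ∑ i, w i * g (x (σf i)) ≤ ((N : ℝ) - 1) * S := by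
    simpa [hS] using approx σf f g
  have step3 : ∑ i, w i * g (x (σg i)) - ∑ i, w i * f (x (σg i)) ≤ ((N : ℝ) - 1) * S := by
    have := approx σg g f
    have habs' : ∑ j, |g (x j) - f (x j)| = S := by
      rw [hS]
      exact Finset.sum_congr rfl fun j _ => abs_sub_comm _ _
    rwa [habs'] at this
  have main : ∑ i, w i * f (x (σf i)) - ∑ i, w i * f (x (σg i))
      ≤ 2 * ((N : ℝ) - 1) * S := by linarith
  have lhs_le : Tstat x f σf - Tstat x f σg ≤ c * (2 * ((N : ℝ) - 1) * S) := by
    rw [hT σf, hT σg, ← mul_sub]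
    exact mul_le_mul_of_nonneg_left main hc0
  -- Cauchy–Schwarz: S ≤ √N * D
  have hCS : S ≤ Real.sqrt N * D := by
    have h1 : S ^ 2 ≤ (N : ℝ) * ∑ j, (f (x j) - g (x j)) ^ 2 := by
      have := sq_sum_le_card_mul_sum_sq (s := (univ : Finset (Fin N))) (f := δ)
      simp only [Finset.card_univ, Fintype.card_fin] at this
      calc S ^ 2 ≤ (N : ℝ) * ∑ j, δ j ^ 2 := this
        _ = (N : ℝ) * ∑ j, (f (x j) - g (x j)) ^ 2 := by
            congr 1
            exact Finset.sum_congr rfl fun j _ => sq_abs _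
    calc S = Real.sqrt (S ^ 2) := (Real.sqrt_sq hS0).symm
      _ ≤ Real.sqrt ((N : ℝ) * ∑ j, (f (x j) - g (x j)) ^ 2) := Real.sqrt_le_sqrt h1
      _ = Real.sqrt N * D := Real.sqrt_mul (Nat.cast_nonneg _) _
  have hsqrtN : 0 < Real.sqrt N := Real.sqrt_pos.mpr (by linarith)
  have hcoef : c * (2 * ((N : ℝ) - 1)) ≤ 4 / (N : ℝ) := by
    rcases eq_or_lt_of_le hNR with h1 | h1
    · rw [hc, ← h1]
      norm_num
    · rw [hc]
      rw [div_mul_eq_mul_div, div_le_div_iff₀ (by nlinarith) (by linarith)]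
      ring_nf
      nlinarith
  have hD0 : 0 ≤ D := Real.sqrt_nonneg _
  calc Tstat x f σf - Tstat x f σg ≤ c * (2 * ((N : ℝ) - 1) * S) := lhs_le
    _ = (c * (2 * ((N : ℝ) - 1))) * S := by ring
    _ ≤ (4 / (N : ℝ)) * S := mul_le_mul_of_nonneg_right hcoef hS0
    _ ≤ (4 / (N : ℝ)) * (Real.sqrt N * D) := by
        apply mul_le_mul_of_nonneg_left hCS
        positivity
    _ = (4 / Real.sqrt N) * D := by
        rw [div_mul_eq_mul_div, div_mul_eq_mul_div, div_eq_div_iff (by linarith) hsqrtN.ne']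
        have : Real.sqrt N * Real.sqrt N = (N : ℝ) := Real.mul_self_sqrt (Nat.cast_nonneg _)
        nlinarith [this]
end
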